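/- arXiv:1711.10013 — 4 statements merged into one kernel-verified Lean document; each statement's English description precedes it below -/
import Mathlib

section
/- Let a, b, λ, t > 0 and let θ be a nonzero real number. Let Ψ(x) = -a(√(b² - 2ix) - b) for real x, where √ denotes the principal branch of the complex square root. Define T₁ = √(-2θ - iλb²), T₂ = √(2θ(1 - e^{-λt}) + iλb²), and G = Log( e^{-λt} (T₁ + i√(iλ) b)² / (T₁ + i T₂)² ), where Log is the principal branch of the complex logarithm. Then ∫₀^{λt} Ψ( θ λ⁻¹ (1 - e^{-λt+s}) ) ds = -(2a/√(iλ)) [ -T₂ + √(iλ) b + (i/2) T₁ G ] + λ a b t. -/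
open MeasureTheory Complex

namespace IGaux

lemma sqrt_mul_self {v : ℂ} (hv : v ≠ 0) : v ^ ((1:ℂ)/2) * v ^ ((1:ℂ)/2) = v := by
  rw [← Complex.cpow_add _ _ hv]; norm_num

lemma sq_sqrt' {v : ℂ} (hv : v ≠ 0) : (v ^ ((1:ℂ)/2)) ^ 2 = v := by
  rw [sq]; exact sqrt_mul_self hv

lemma re_sqrt_pos {v : ℂ} (hv : v ≠ 0) (hπ : v.arg ≠ Real.pi) : 0 < (v ^ ((1:ℂ)/2)).re := by
  rw [Complex.cpow_def_of_ne_zero hv, Complex.exp_re]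
  apply mul_pos (Real.exp_pos _)
  apply Real.cos_pos_of_mem_Ioo
  have him : (Complex.log v * (1/2)).im = v.arg / 2 := by
    simp [Complex.mul_im, Complex.log_im]; ring
  rw [him]
  have h1 := Complex.neg_pi_lt_arg v
  have h2' : v.arg < Real.pi := lt_of_le_of_ne (Complex.arg_le_pi v) hπ
  constructor <;> [linarith; linarith]

lemma sqrt_eq {u : ℂ} (hu : 0 < u.re) : (u^2) ^ ((1:ℂ)/2) = u := by
  have hu0 : u ≠ 0 := fun h => by simp [h] at hu
  have hv0 : u ^ 2 ≠ 0 := pow_ne_zero _ hu0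
  have hπ : (u^2).arg ≠ Real.pi := by
    rw [Ne, Complex.arg_eq_pi_iff]
    rintro ⟨h1, h2⟩
    have him : (u^2).im = 2 * u.re * u.im := by
      rw [sq, Complex.mul_im]; ring
    have hre : (u^2).re = u.re^2 - u.im^2 := by
      rw [sq, Complex.mul_re]; ring
    rw [him] at h2
    have : u.im = 0 := by
      rcases mul_eq_zero.mp h2 with h | h
      · rcases mul_eq_zero.mp h with h | h
        · norm_num at h
        · linarith
      · exact h
    rw [hre, this] at h1
    nlinarith
  have hw2 : ((u^2) ^ ((1:ℂ)/2))^2 = u^2 := sq_sqrt' hv0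
  have hwre : 0 < ((u^2) ^ ((1:ℂ)/2)).re := re_sqrt_pos hv0 hπ
  set w := (u^2) ^ ((1:ℂ)/2) with hwdef
  have hfac : (w - u) * (w + u) = 0 := by
    calc (w - u)*(w + u) = w^2 - u^2 := by ring
    _ = 0 := by rw [hw2]; ring
  rcases mul_eq_zero.mp hfac with h | h
  · exact sub_eq_zero.mp h
  · exfalso
    have hwu : w = -u := eq_neg_of_add_eq_zero_left h
    rw [hwu] at hwre
    simp only [Complex.neg_re] at hwre
    linarith

lemma abs_im_lt_re {u : ℂ} (h1 : 0 < u.re) (h2 : 0 < (u^2).re) : |u.im| < u.re := by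
  have hre : (u^2).re = u.re^2 - u.im^2 := by
    rw [sq, Complex.mul_re]; ring
  rw [hre] at h2
  rw [abs_lt]
  constructor <;> nlinarith

lemma deriv_algebra (a' b' z α : ℂ) (hz : z ≠ 0) (h2 : z + α ≠ 0) (h3 : z - α ≠ 0) :
    -a' * (2 * ((z^2 - α^2)/(2*z)) + α * (((z^2-α^2)/(2*z)*(z+α) - (z-α)*((z^2-α^2)/(2*z)))/(z+α)^2 / ((z-α)/(z+α)))) + a'*b'*1
    = -a' * (z - b') := by
  have e1 : (z^2-α^2)/(2*z)*(z+α) - (z-α)*((z^2-α^2)/(2*z)) = α*(z^2-α^2)/z := by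
    field_simp; ring
  have e2 : α*(z^2-α^2)/z / (z+α)^2 / ((z-α)/(z+α)) = α/z := by
    field_simp; ring
  rw [e1, e2]
  field_simp
  ring

lemma final_algebra (a' b' lam' t' S α z₀ Lm Ln : ℂ) (hS : S ≠ 0) :
    (-a' * (2*b' + α*Lm) + a'*b'*(lam'*t')) - (-a' * (2*z₀ + α*Ln) + a'*b'*0)
    = -(2*a'/S) * (-(S*z₀) + S*b' + Complex.I/2*(-Complex.I*S*α)*(Lm - Ln)) + lam'*a'*b'*t' := by
  have h : Complex.I/2 * (-Complex.I*S*α) = S*α/2 := by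
    linear_combination (-(S*α)/2) * Complex.I_sq
  rw [h]
  field_simp
  ring

end IGaux

open IGaux

set_option maxHeartbeats 1000000 in
/-- Closed-form evaluation of the cumulant integral `I_F(λt, θ)` for the
Inverse Gaussian characteristic exponent `Ψ(x) = -a(√(b² - 2ix) - b)`
(principal branch of the complex square root and logarithm). -/
theorem integral_IG_exponent_closed_form
    (a b lam t θ : ℝ) (ha : 0 < a) (hb : 0 < b) (hlam : 0 < lam) (ht : 0 < t)
    (hθ : θ ≠ 0)
    (Ψ : ℝ → ℂ)
    (hΨ : ∀ x : ℝ, Ψ x = -(a : ℂ) * (((b : ℂ) ^ 2 - 2 * Complex.I * (x : ℂ)) ^ ((1 : ℂ)/2) - (b : ℂ)))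
    (T₁ T₂ G : ℂ)
    (hT₁ : T₁ = (-2 * (θ : ℂ) - Complex.I * (lam : ℂ) * (b : ℂ) ^ 2) ^ ((1 : ℂ)/2))
    (hT₂ : T₂ = (2 * (θ : ℂ) * (1 - Complex.exp (-(lam : ℂ) * (t : ℂ))) + Complex.I * (lam : ℂ) * (b : ℂ) ^ 2) ^ ((1 : ℂ)/2))
    (hG : G = Complex.log (Complex.exp (-(lam : ℂ) * (t : ℂ)) *
        (T₁ + Complex.I * ((Complex.I * (lam : ℂ)) ^ ((1 : ℂ)/2)) * (b : ℂ)) ^ 2 /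
        (T₁ + Complex.I * T₂) ^ 2)) :
    (∫ s in (0 : ℝ)..(lam * t), Ψ (θ * lam⁻¹ * (1 - Real.exp (-(lam * t) + s))))
      = -(2 * (a : ℂ) / ((Complex.I * (lam : ℂ)) ^ ((1 : ℂ)/2))) *
          (-T₂ + ((Complex.I * (lam : ℂ)) ^ ((1 : ℂ)/2)) * (b : ℂ) + (Complex.I / 2) * T₁ * G)
        + (lam : ℂ) * (a : ℂ) * (b : ℂ) * (t : ℂ) := by
  have hlam0 : (lam : ℝ) ≠ 0 := ne_of_gt hlam
  have hlt : (0:ℝ) < lam * t := mul_pos hlam ht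
  set C : ℝ := 2*θ/lam with hCdef
  have hC : C ≠ 0 := div_ne_zero (by simpa using hθ) hlam0
  set A : ℂ := ((b^2 : ℝ) : ℂ) - Complex.I * (C : ℂ) with hAdef
  have hAre : A.re = b^2 := by simp [hAdef, pow_two, Complex.mul_re, Complex.mul_im]
  have hAim : A.im = -C := by simp [hAdef, pow_two, Complex.mul_re, Complex.mul_im]
  have hbsq : (0:ℝ) < b^2 := by positivity
  have hA0 : A ≠ 0 := fun h => by rw [h] at hAre; simp at hAre; nlinarith
  have hAarg : A.arg ≠ Real.pi := by
    rw [Ne, Complex.arg_eq_pi_iff]; rintro ⟨h1, -⟩; rw [hAre] at h1; linarith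
  set α : ℂ := A ^ ((1:ℂ)/2) with hαdef
  have hα2 : α^2 = A := sq_sqrt' hA0
  have hαre : 0 < α.re := re_sqrt_pos hA0 hAarg
  have hαsec : |α.im| < α.re := abs_im_lt_re hαre (by rw [hα2, hAre]; exact hbsq)
  have hα0 : α ≠ 0 := fun h => by rw [h] at hαre; simp at hαre
  have hαim : α.im ≠ 0 := by
    intro h
    have : A.im = 2 * α.re * α.im := by rw [← hα2, sq, Complex.mul_im]; ring
    rw [hAim, h] at this; simp at this; exact hC this
  -- the path
  set x : ℝ → ℝ := fun s => 1 - Real.exp (s - lam*t) with hxdef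
  set f : ℝ → ℂ := fun s => ((b^2 : ℝ) : ℂ) - Complex.I * ((C * x s : ℝ) : ℂ) with hfdef
  have hfre : ∀ s, (f s).re = b^2 := by
    intro s; simp [hfdef, pow_two, Complex.mul_re, Complex.mul_im]
  have hfim : ∀ s, (f s).im = -(C * x s) := by
    intro s; simp [hfdef, pow_two, Complex.mul_re, Complex.mul_im]
  have hf0 : ∀ s, f s ≠ 0 := by
    intro s h
    have := hfre s; rw [h] at this; simp at this; nlinarith
  have hfarg : ∀ s, (f s).arg ≠ Real.pi := by
    intro s; rw [Ne, Complex.arg_eq_pi_iff]; rintro ⟨h1, -⟩; rw [hfre s] at h1; linarith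
  have hfslit : ∀ s, f s ∈ Complex.slitPlane := by
    intro s; rw [Complex.mem_slitPlane_iff]; left; rw [hfre s]; exact hbsq
  set z : ℝ → ℂ := fun s => f s ^ ((1:ℂ)/2) with hzdef
  have hz2 : ∀ s, (z s)^2 = f s := fun s => sq_sqrt' (hf0 s)
  have hzre : ∀ s, 0 < (z s).re := fun s => re_sqrt_pos (hf0 s) (hfarg s)
  have hzsec : ∀ s, |(z s).im| < (z s).re := fun s =>
    abs_im_lt_re (hzre s) (by rw [hz2 s, hfre s]; exact hbsq)
  have hz0 : ∀ s, z s ≠ 0 := fun s h => by have := hzre s; rw [h] at this; simp at this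
  have hfA : ∀ s, f s - A = Complex.I * ((C * Real.exp (s - lam*t) : ℝ) : ℂ) := by
    intro s
    simp only [hfdef, hAdef, hxdef]
    push_cast
    ring
  have hfA0 : ∀ s, f s - A ≠ 0 := by
    intro s h
    rw [hfA s] at h
    have h2 : ((C * Real.exp (s - lam*t) : ℝ) : ℂ) = 0 := by
      rcases mul_eq_zero.mp h with h' | h'
      · exact absurd h' Complex.I_ne_zero
      · exact h'
    rw [Complex.ofReal_eq_zero] at h2
    rcases mul_eq_zero.mp h2 with h' | h'
    · exact hC h'
    · exact absurd h' (Real.exp_ne_zero _)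
  have hzpα : ∀ s, z s + α ≠ 0 := by
    intro s h
    have : (z s + α).re = 0 := by rw [h]; simp
    rw [Complex.add_re] at this
    have := hzre s
    linarith
  have hzmα : ∀ s, z s - α ≠ 0 := by
    intro s h
    apply hfA0 s
    rw [← hz2 s, ← hα2]
    have : z s = α := sub_eq_zero.mp h
    rw [this]; ring
  set g : ℝ → ℂ := fun s => (z s - α)/(z s + α) with hgdef
  have hg0 : ∀ s, g s ≠ 0 := fun s => div_ne_zero (hzmα s) (hzpα s)
  -- sign of the imaginary part of g
  have himg : ∀ s, 0 < C * (g s).im := by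
    intro s
    set u : ℂ := z s * (starRingEnd ℂ) α with hudef
    have hure : 0 < u.re := by
      rw [hudef, Complex.mul_re, Complex.conj_re, Complex.conj_im]
      have h1 := hzsec s; have h2 := hαsec
      have h3 := abs_nonneg (z s).im; have h4 := abs_nonneg α.im
      have h7 := neg_abs_le ((z s).im * α.im)
      have h6 : |(z s).im * α.im| = |(z s).im| * |α.im| := abs_mul _ _
      nlinarith [mul_pos (sub_pos.mpr h1) (sub_pos.mpr h2), mul_pos (hzre s) hαre]
    have hu2im : (u^2).im = C * b^2 * Real.exp (s - lam*t) := by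
      have : u^2 = f s * (starRingEnd ℂ) A := by
        rw [hudef]
        rw [mul_pow, hz2 s, ← _root_.map_pow, hα2]
      rw [this, Complex.mul_im, Complex.conj_re, Complex.conj_im, hfre s, hAim, hAre, hfim s]
      simp only [hxdef]
      ring
    have huim : 0 < C * u.im := by
      have h2 : (u^2).im = 2 * u.re * u.im := by rw [sq, Complex.mul_im]; ring
      have h3 : 0 < C * (u^2).im := by
        rw [hu2im]
        have he := Real.exp_pos (s - lam*t)
        have hC2 : 0 < C^2 := by positivity
        nlinarith [mul_pos (mul_pos hC2 hbsq) he]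
      rw [h2] at h3
      nlinarith
    have : (g s).im = 2 * u.im / Complex.normSq (z s + α) := by
      rw [hgdef]
      rw [Complex.div_im]
      rw [hudef, Complex.mul_im, Complex.conj_re, Complex.conj_im]
      simp only [Complex.sub_re, Complex.sub_im, Complex.add_re, Complex.add_im]
      ring
    have hns : 0 < Complex.normSq (z s + α) := Complex.normSq_pos.mpr (hzpα s)
    have him2 : C * (g s).im = 2 * (C * u.im) / Complex.normSq (z s + α) := by
      rw [this]; ring
    rw [him2]
    exact div_pos (by linarith) hns
  have hgim : ∀ s, (g s).im ≠ 0 := by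
    intro s h
    have := himg s; rw [h] at this; simp at this
  have hgslit : ∀ s, g s ∈ Complex.slitPlane := by
    intro s; rw [Complex.mem_slitPlane_iff]; right; exact hgim s

  -- rewrite z in exponential form
  have hzs : ∀ s, Complex.exp (Complex.log (f s) * ((1:ℂ)/2)) = z s := by
    intro s
    rw [hzdef]
    exact (Complex.cpow_def_of_ne_zero (hf0 s) _).symm
  -- derivative of f
  have hfd : ∀ s : ℝ, HasDerivAt f (Complex.I * ((C * Real.exp (s - lam*t) : ℝ) : ℂ)) s := by
    intro s
    have h1 : HasDerivAt (fun s : ℝ => s - lam*t) 1 s := (hasDerivAt_id s).sub_const _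
    have h2 : HasDerivAt (fun s : ℝ => Real.exp (s - lam*t)) (Real.exp (s - lam*t)) s := by
      simpa using h1.exp
    have h3 : HasDerivAt (fun s : ℝ => C * x s) (-(C * Real.exp (s - lam*t))) s := by
      have := (h2.const_sub 1).const_mul C
      simpa [hxdef, mul_comm] using this
    have h4 := (h3.ofReal_comp.const_mul Complex.I).const_sub (((b^2 : ℝ)) : ℂ)
    exact h4.congr_deriv (by push_cast; ring)
  -- derivative of z
  have hzd : ∀ s : ℝ, HasDerivAt z ((f s - A) / (2 * z s)) s := by
    intro s
    have hlog : HasDerivAt (fun s => Complex.log (f s))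
        ((Complex.I * ((C * Real.exp (s - lam*t) : ℝ) : ℂ)) / f s) s :=
      (hfd s).clog_real (hfslit s)
    have h5 := (hlog.mul_const ((1:ℂ)/2)).cexp
    have h6 : HasDerivAt z
        (Complex.exp (Complex.log (f s) * ((1:ℂ)/2)) *
          ((Complex.I * ((C * Real.exp (s - lam*t) : ℝ) : ℂ)) / f s * ((1:ℂ)/2))) s := by
      apply h5.congr_of_eventuallyEq
      exact Filter.Eventually.of_forall fun y => (hzs y).symm
    convert h6 using 1
    rw [hzs s, ← hfA s, ← hz2 s]
    have hz := hz0 s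
    field_simp
  -- derivative of the antiderivative F
  set F : ℝ → ℂ := fun s => -(a:ℂ) * (2 * z s + α * Complex.log (g s)) + (a:ℂ)*b*(s:ℂ) with hFdef
  have hFd : ∀ s : ℝ, HasDerivAt F (-(a:ℂ) * (z s - b)) s := by
    intro s
    have hgd : HasDerivAt g
        (((f s - A) / (2 * z s) * (z s + α) - (z s - α) * ((f s - A) / (2 * z s))) / (z s + α)^2) s :=
      ((hzd s).sub_const α).div ((hzd s).add_const α) (hzpα s)
    have hld := hgd.clog_real (hgslit s)
    have hsd : HasDerivAt (fun s : ℝ => (s:ℂ)) 1 s := (hasDerivAt_id s).ofReal_comp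
    have hcomb := ((((hzd s).const_mul (2:ℂ)).add (hld.const_mul α)).const_mul
      (-(a:ℂ))).add (hsd.const_mul ((a:ℂ)*b))
    refine hcomb.congr_deriv ?_
    have hrw : f s - A = z s ^ 2 - α^2 := by rw [hz2 s, hα2]
    simp only [hgdef, hrw]
    exact (deriv_algebra (a:ℂ) (b:ℂ) (z s) α (hz0 s) (hzpα s) (hzmα s))
  -- continuity of the integrand
  have hzc : Continuous z := by
    rw [continuous_iff_continuousAt]
    exact fun s => (hzd s).continuousAt
  have hcont : Continuous (fun s => -(a:ℂ) * (z s - b)) := by fun_prop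
  -- identification of the integrand
  have hinteg : ∀ s : ℝ, Ψ (θ * lam⁻¹ * (1 - Real.exp (-(lam * t) + s))) = -(a:ℂ) * (z s - b) := by
    intro s
    rw [hΨ]
    have harg : ((b:ℂ)^2 - 2*Complex.I*((θ * lam⁻¹ * (1 - Real.exp (-(lam*t)+s)) : ℝ) : ℂ)) = f s := by
      simp only [hfdef, hxdef, hCdef]
      have hexp : -(lam*t)+s = s - lam*t := by ring
      rw [hexp]
      push_cast
      field_simp
    rw [harg]
  -- the integral via the fundamental theorem of calculus
  have hEq : (∫ s in (0:ℝ)..(lam*t), Ψ (θ * lam⁻¹ * (1 - Real.exp (-(lam * t) + s))))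
      = F (lam*t) - F 0 := by
    simp only [hinteg]
    exact intervalIntegral.integral_eq_sub_of_hasDerivAt (fun s _ => hFd s)
      (hcont.intervalIntegrable _ _)

  -- endpoint values
  have hx1 : x (lam*t) = 0 := by simp [hxdef]
  have hfb : f (lam*t) = ((b:ℂ))^2 := by
    simp only [hfdef, hx1]
    push_cast; ring
  have hzb : z (lam*t) = (b:ℂ) := by
    show f (lam*t) ^ ((1:ℂ)/2) = (b:ℂ)
    rw [hfb]
    exact sqrt_eq (by simp [hb])
  set z₀ := z 0 with hz₀def
  set m := ((b:ℂ) - α)/((b:ℂ) + α) with hmdef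
  set n := (z₀ - α)/(z₀ + α) with hndef
  have hgm : g (lam*t) = m := by
    rw [hgdef, hmdef]
    simp only [hzb]
  have hgn : g 0 = n := by rw [hgdef, hndef, hz₀def]
  have hbpα : (b:ℂ) + α ≠ 0 := by have := hzpα (lam*t); rwa [hzb] at this
  have hbmα : (b:ℂ) - α ≠ 0 := by have := hzmα (lam*t); rwa [hzb] at this
  have hzpα0 : z₀ + α ≠ 0 := hzpα 0
  have hzmα0 : z₀ - α ≠ 0 := hzmα 0
  have hm0 : m ≠ 0 := by rw [← hgm]; exact hg0 _
  have hn0 : n ≠ 0 := by rw [← hgn]; exact hg0 _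
  -- the square root of I * lam
  set q := Real.sqrt (lam/2) with hqdef
  have hq : 0 < q := Real.sqrt_pos.mpr (by positivity)
  set S : ℂ := (q:ℂ) * (1 + Complex.I) with hSdef
  have hSsq : S^2 = Complex.I * (lam:ℂ) := by
    have h1 : ((q:ℂ))^2 = ((lam/2 : ℝ):ℂ) := by
      rw [← Complex.ofReal_pow, hqdef]
      norm_cast
      exact Real.sq_sqrt (by positivity)
    calc S^2 = ((q:ℂ))^2 * (1+Complex.I)^2 := by rw [hSdef]; ring
    _ = ((lam/2:ℝ):ℂ) * (2*Complex.I) := by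
        rw [h1]; congr 1; linear_combination Complex.I_sq
    _ = Complex.I * (lam:ℂ) := by push_cast; ring
  have hSre : S.re = q := by
    simp [hSdef, Complex.mul_re]
  have hS0 : S ≠ 0 := by
    intro h; rw [h] at hSre; simp at hSre; rw [← hSre] at hq; simp at hq
  have hSval : (Complex.I * (lam:ℂ)) ^ ((1:ℂ)/2) = S := by
    rw [← hSsq]
    exact sqrt_eq (by rw [hSre]; exact hq)
  -- T₁ = -I S α
  have hT1v : T₁ = -Complex.I * S * α := by
    rw [hT₁]
    have hre : 0 < (-Complex.I * S * α).re := by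
      have hrw : (-Complex.I * S * α).re = q * (α.re + α.im) := by
        rw [hSdef]
        simp [Complex.mul_re, Complex.mul_im]
        ring
      rw [hrw]
      have := neg_abs_le α.im
      have : 0 < α.re + α.im := by nlinarith [hαsec, neg_abs_le α.im]
      positivity
    have h2 : (-Complex.I * S * α)^2 = -2*(θ:ℂ) - Complex.I*(lam:ℂ)*(b:ℂ)^2 := by
      calc (-Complex.I*S*α)^2 = Complex.I^2 * S^2 * α^2 := by ring
      _ = -(Complex.I*(lam:ℂ)) * A := by rw [Complex.I_sq, hSsq, hα2]; ring
      _ = -2*(θ:ℂ) - Complex.I*(lam:ℂ)*(b:ℂ)^2 := by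
          rw [hAdef, hCdef]
          have hl : (lam:ℂ) ≠ 0 := Complex.ofReal_ne_zero.mpr hlam0
          push_cast
          field_simp
          linear_combination (2*(θ:ℂ)) * Complex.I_sq
    rw [← h2]
    exact sqrt_eq hre
  -- T₂ = S z₀
  set E : ℂ := Complex.exp (-(lam:ℂ)*(t:ℂ)) with hEdef
  have hx0 : ((x 0 : ℝ):ℂ) = 1 - E := by
    rw [hEdef]
    simp only [hxdef]
    push_cast
    norm_num
  have hf0v : f 0 = ((b^2:ℝ):ℂ) - Complex.I * ((C:ℂ) * (1 - E)) := by
    simp only [hfdef]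
    rw [Complex.ofReal_mul, hx0]
  have hT2v : T₂ = S * z₀ := by
    rw [hT₂]
    have hre : 0 < (S * z₀).re := by
      have hrw : (S * z₀).re = q * (z₀.re - z₀.im) := by
        rw [hSdef]
        simp [Complex.mul_re, Complex.mul_im]
        ring
      rw [hrw]
      have : 0 < z₀.re - z₀.im := by nlinarith [hzsec 0, le_abs_self (z 0).im]
      positivity
    have h2 : (S * z₀)^2 = 2*(θ:ℂ)*(1 - E) + Complex.I*(lam:ℂ)*(b:ℂ)^2 := by
      calc (S*z₀)^2 = S^2 * (z 0)^2 := by rw [hz₀def]; ring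
      _ = (Complex.I*(lam:ℂ)) * f 0 := by rw [hSsq, hz2 0]
      _ = 2*(θ:ℂ)*(1 - E) + Complex.I*(lam:ℂ)*(b:ℂ)^2 := by
          rw [hf0v, hCdef]
          have hl : (lam:ℂ) ≠ 0 := Complex.ofReal_ne_zero.mpr hlam0
          push_cast
          field_simp
          linear_combination (2*(θ:ℂ)*(E - 1)) * Complex.I_sq
    rw [← h2]
    exact sqrt_eq hre
  -- the exponential relation
  have hE : E * (((b:ℂ)+α) * ((b:ℂ)-α)) = (z₀+α)*(z₀-α) := by
    have h1 : (z₀+α)*(z₀-α) = f 0 - A := by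
      rw [hz₀def, ← hz2 0, ← hα2]; ring
    have h2 : ((b:ℂ)+α)*((b:ℂ)-α) = ((b^2:ℝ):ℂ) - A := by
      rw [← hα2]; push_cast; ring
    rw [h1, h2, hf0v, hAdef]
    ring
  -- G = log (m / n)
  have hGv : G = Complex.log (m / n) := by
    rw [hG, hT1v, hT2v, hSval]
    congr 1
    have hIS : Complex.I * S ≠ 0 := mul_ne_zero Complex.I_ne_zero hS0
    have hfac1 : -Complex.I*S*α + Complex.I*S*(b:ℂ) = Complex.I*S*((b:ℂ)-α) := by ring
    have hfac2 : -Complex.I*S*α + Complex.I*(S*z₀) = Complex.I*S*(z₀-α) := by ring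
    rw [hfac1, hfac2]
    have hIS : Complex.I * S ≠ 0 := mul_ne_zero Complex.I_ne_zero hS0
    rw [div_eq_div_iff (pow_ne_zero 2 (mul_ne_zero hIS hzmα0)) hn0, hmdef, hndef]
    field_simp
    linear_combination hE
  -- log (m/n) = log m - log n
  have hlogsplit : Complex.log (m / n) = Complex.log m - Complex.log n := by
    have hquot : m / n = Complex.exp (Complex.log m - Complex.log n) := by
      rw [Complex.exp_sub, Complex.exp_log hm0, Complex.exp_log hn0]
    have him : (Complex.log m - Complex.log n).im = m.arg - n.arg := by
      simp [Complex.sub_im, Complex.log_im]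
    have hmim : 0 < C * m.im := by have := himg (lam*t); rwa [hgm] at this
    have hnim : 0 < C * n.im := by have := himg 0; rwa [hgn] at this
    have hmain : -Real.pi < m.arg - n.arg ∧ m.arg - n.arg < Real.pi := by
      rcases lt_or_gt_of_ne hC with hneg | hpos
      · have h1 : m.im < 0 := by nlinarith
        have h2 : n.im < 0 := by nlinarith
        have h3 : m.arg < 0 := Complex.arg_neg_iff.mpr h1
        have h4 : n.arg < 0 := Complex.arg_neg_iff.mpr h2
        have h5 := Complex.neg_pi_lt_arg m
        have h6 := Complex.neg_pi_lt_arg n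
        constructor <;> linarith
      · have h1 : 0 < m.im := by nlinarith
        have h2 : 0 < n.im := by nlinarith
        have h3 : 0 ≤ m.arg := Complex.arg_nonneg_iff.mpr h1.le
        have h4 : 0 ≤ n.arg := Complex.arg_nonneg_iff.mpr h2.le
        have h5 : m.arg < Real.pi := lt_of_le_of_ne (Complex.arg_le_pi m)
          (fun h => absurd (Complex.arg_eq_pi_iff.mp h).2 (ne_of_gt h1))
        have h6 : n.arg < Real.pi := lt_of_le_of_ne (Complex.arg_le_pi n)
          (fun h => absurd (Complex.arg_eq_pi_iff.mp h).2 (ne_of_gt h2))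
        constructor <;> linarith
    rw [hquot, Complex.log_exp (by rw [him]; exact hmain.1) (by rw [him]; linarith [hmain.2])]
  -- final assembly
  rw [hEq, hSval, hT1v, hT2v, hGv, hlogsplit]
  simp only [hFdef]
  rw [hzb, hgm, hgn, ← hz₀def, Complex.ofReal_zero,
    show ((lam*t : ℝ):ℂ) = (lam:ℂ)*(t:ℂ) by push_cast; ring]
  linear_combination final_algebra (a:ℂ) (b:ℂ) (lam:ℂ) (t:ℂ) S α z₀
    (Complex.log m) (Complex.log n) hS0
end

section
/- Let a, b, λ, t > 0, let n ≥ 2 be an integer, and let Ψ(x) = -a(√(b² - 2ix) - b) for real x, where √ denotes the principal branch of the complex square root. Then for every nonzero real θ, the n-th derivative of I(θ) = ∫₀^{λt} Ψ( θ λ⁻¹ (1 - e^{-λt+s}) ) ds exists at θ and equals I⁽ⁿ⁾(θ) = (-1)ⁿ ( ∏_{k=2}^{n} (2k-3) ) (a/√(iλ)) ∫₀^{λt} (1 - e^{-λt+s})ⁿ ( 2θ (1 - e^{-λt+s}) + i λ b² )^{-(2n-1)/2} ds, where the complex power w^{-(2n-1)/2} is taken with the principal branch. -/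
open MeasureTheory Complex intervalIntegral Set

lemma castfact (α β : ℂ) (y v : ℝ) : β + α * (y:ℂ) * (v:ℂ) = β + α * ((y*v : ℝ):ℂ) := by
  push_cast; ring

lemma cont_aux {u : ℝ → ℝ} (hu : Continuous u) (α β c : ℂ) (m : ℕ) (y : ℝ)
    (hslit : ∀ r : ℝ, β + α * r ∈ Complex.slitPlane) (S : Set ℝ) :
    ContinuousOn (fun s : ℝ => ((u s : ℝ) : ℂ) ^ m * (β + α * y * (u s)) ^ c) S := by
  apply ContinuousOn.mul
  · exact ((Complex.continuous_ofReal.comp hu).pow m).continuousOn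
  · apply ContinuousOn.cpow_const
    · exact (continuous_const.add
        ((continuous_const.mul (Complex.continuous_ofReal.comp hu)))).continuousOn
    · intro s _
      rw [castfact]
      exact hslit _

lemma keyDeriv {T : ℝ} {u : ℝ → ℝ} (hu : Continuous u)
    (hub : ∀ s ∈ Set.uIcc (0:ℝ) T, |u s| ≤ 1)
    (α β : ℂ) (w : ℝ) (hw : w ≤ 1) (m : ℕ) (δ : ℝ) (hδ : 0 < δ)
    (habs : ∀ r : ℝ, δ ≤ ‖β + α * r‖)
    (hslit : ∀ r : ℝ, β + α * r ∈ Complex.slitPlane)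
    (x : ℝ) :
    HasDerivAt (fun y : ℝ => ∫ s in (0:ℝ)..T, ((u s : ℝ) : ℂ) ^ m * (β + α * y * (u s)) ^ ((w : ℝ) : ℂ))
      (((w : ℝ):ℂ) * α * ∫ s in (0:ℝ)..T,
        ((u s : ℝ) : ℂ) ^ (m+1) * (β + α * x * (u s)) ^ (((w - 1 : ℝ)) : ℂ)) x := by
  have hne : ∀ r : ℝ, β + α * r ≠ 0 := by
    intro r h
    have := habs r
    rw [h] at this; simp at this; linarith
  have main := intervalIntegral.hasDerivAt_integral_of_dominated_loc_of_deriv_le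
    (𝕜 := ℝ) (μ := volume) (a := 0) (b := T)
    (F := fun (y : ℝ) (s : ℝ) => ((u s : ℝ) : ℂ) ^ m * (β + α * y * (u s)) ^ ((w : ℝ) : ℂ))
    (F' := fun (y : ℝ) (s : ℝ) => (((w : ℝ):ℂ) * α) *
      (((u s : ℝ) : ℂ) ^ (m+1) * (β + α * y * (u s)) ^ (((w - 1 : ℝ)) : ℂ)))
    (x₀ := x) (s := Metric.ball x 1)
    (bound := fun _ => |w| * ‖α‖ * δ ^ (w - 1))
    (Metric.ball_mem_nhds x one_pos)
    (Filter.Eventually.of_forall fun y =>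
      ((cont_aux hu α β _ m y hslit _).mono uIoc_subset_uIcc).aestronglyMeasurable
        measurableSet_uIoc)
    ((cont_aux hu α β _ m x hslit _).intervalIntegrable)
    (((continuous_const.continuousOn.mul
        (cont_aux hu α β _ (m+1) x hslit (uIcc (0:ℝ) T))).mono
        uIoc_subset_uIcc).aestronglyMeasurable measurableSet_uIoc)
    ?_ intervalIntegrable_const ?_
  · rw [← intervalIntegral.integral_const_mul]
    exact main.2
  · -- bound
    refine MeasureTheory.ae_of_all _ fun s hs y _ => ?_
    have hs' : s ∈ Set.uIcc (0:ℝ) T := uIoc_subset_uIcc hs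
    have h1 : |u s| ≤ 1 := hub s hs'
    rw [castfact]
    have hz := hne (y * u s)
    rw [norm_mul, norm_mul, norm_mul, norm_pow]
    simp only [Complex.norm_real, Real.norm_eq_abs]
    rw [Complex.norm_cpow_of_ne_zero hz]
    simp only [Complex.ofReal_re, Complex.ofReal_im, mul_zero, Real.exp_zero, div_one]
    have h2 : |u s| ^ (m+1) ≤ 1 := pow_le_one₀ (abs_nonneg _) h1
    have h3 : ‖β + α * ((y * u s : ℝ):ℂ)‖ ^ (w - 1) ≤ δ ^ (w - 1) :=
      Real.rpow_le_rpow_of_nonpos hδ (habs _) (by linarith)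
    calc |w| * ‖α‖ * (|u s| ^ (m+1) * ‖β + α * ((y * u s : ℝ):ℂ)‖ ^ (w-1))
        ≤ |w| * ‖α‖ * (1 * δ ^ (w-1)) := by
          apply mul_le_mul_of_nonneg_left
          · exact mul_le_mul h2 h3 (Real.rpow_nonneg (norm_nonneg _) _) zero_le_one
          · positivity
      _ = |w| * ‖α‖ * δ ^ (w-1) := by ring
  · -- differentiability
    refine MeasureTheory.ae_of_all _ fun s hs y _ => ?_
    have hbase : HasDerivAt (fun z : ℂ => β + α * z * ((u s : ℝ):ℂ)) (α * ((u s : ℝ):ℂ)) (y:ℂ) := by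
      simpa using (((hasDerivAt_id (y:ℂ)).const_mul α).mul_const ((u s : ℝ):ℂ)).const_add β
    have hsl : β + α * (y:ℂ) * ((u s : ℝ):ℂ) ∈ Complex.slitPlane := by
      rw [castfact]; exact hslit _
    have hd := (((hbase.cpow_const (c := ((w : ℝ):ℂ)) hsl).comp_ofReal).const_mul
      (((u s : ℝ):ℂ) ^ m))
    refine hd.congr_deriv ?_
    have hexp : ((w : ℝ):ℂ) - 1 = (((w - 1 : ℝ)):ℂ) := by push_cast; ring
    rw [← hexp]
    ring

lemma cpow_Imul (lam : ℝ) (hlam : 0 < lam) (w : ℂ) (hw : 0 < w.re) (c : ℂ) :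
    ((Complex.I * (lam:ℂ)) * w) ^ c = (Complex.I * (lam:ℂ)) ^ c * w ^ c := by
  have hz0 : Complex.I * (lam:ℂ) ≠ 0 :=
    mul_ne_zero Complex.I_ne_zero (Complex.ofReal_ne_zero.2 hlam.ne')
  have hw0 : w ≠ 0 := by intro h; rw [h] at hw; simp at hw
  have hargz : Complex.arg (Complex.I * (lam:ℂ)) = Real.pi / 2 := by
    rw [Complex.arg_eq_pi_div_two_iff]
    constructor <;> simp [Complex.mul_re, Complex.mul_im, hlam]
  have hargw : |Complex.arg w| < Real.pi / 2 :=
    Complex.abs_arg_lt_pi_div_two_iff.2 (Or.inl hw)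
  have hmem : Complex.arg (Complex.I * (lam:ℂ)) + Complex.arg w ∈ Set.Ioc (-Real.pi) Real.pi := by
    rw [hargz]
    rw [abs_lt] at hargw
    have hpi := Real.pi_pos
    constructor <;> [linarith; linarith]
  have hlog := Complex.log_mul hz0 hw0 hmem
  rw [Complex.cpow_def_of_ne_zero (mul_ne_zero hz0 hw0), hlog,
    Complex.cpow_def_of_ne_zero hz0, Complex.cpow_def_of_ne_zero hw0, add_mul, Complex.exp_add]

theorem helper (a b lam t : ℝ) (hb : 0 < b) (hlam : 0 < lam)
    (u : ℝ → ℝ) (hu : Continuous u)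
    (hub : ∀ s ∈ Set.uIcc (0:ℝ) (lam*t), |u s| ≤ 1) :
    ∀ n : ℕ, 2 ≤ n → ∀ θ : ℝ,
    iteratedDeriv n (fun θ : ℝ => ∫ s in (0:ℝ)..(lam*t),
        -(a:ℂ) * (((b:ℂ)^2 - 2*Complex.I*((θ*lam⁻¹*(u s) : ℝ):ℂ)) ^ ((1 : ℂ)/2) - (b:ℂ))) θ
    = (-1:ℂ)^n * (∏ k ∈ Finset.Icc 2 n, (2*(k:ℂ)-3)) *
        ((a:ℂ)/((Complex.I*(lam:ℂ))^((1:ℂ)/2))) *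
      ∫ s in (0:ℝ)..(lam*t), ((u s : ℝ):ℂ)^n *
        (Complex.I*(lam:ℂ)*(b:ℂ)^2 + 2*(θ:ℂ)*((u s:ℝ):ℂ)) ^ ((((1-2*(n:ℝ))/2 : ℝ)):ℂ) := by
  have hlam' : (lam:ℂ) ≠ 0 := Complex.ofReal_ne_zero.2 hlam.ne'
  have hIl0 : Complex.I * (lam:ℂ) ≠ 0 := mul_ne_zero Complex.I_ne_zero hlam'
  have hA0 : (Complex.I * (lam:ℂ)) ^ ((1:ℂ)/2) ≠ 0 := by
    simp [Complex.cpow_eq_zero_iff, hIl0]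
  -- family 0 facts
  have hre0 : ∀ r : ℝ, ((b:ℂ)^2 + (-2*Complex.I*(lam:ℂ)⁻¹) * (r:ℂ)).re = b^2 := by
    intro r
    have h : (b:ℂ)^2 + (-2*Complex.I*(lam:ℂ)⁻¹) * (r:ℂ)
        = ((b^2 : ℝ):ℂ) + ((-2*r*lam⁻¹ : ℝ):ℂ) * Complex.I := by push_cast; ring
    rw [h]
    simp [Complex.add_re, Complex.mul_re, Complex.I_re, Complex.I_im,
      Complex.ofReal_re, Complex.ofReal_im, ← Complex.ofReal_pow]
  have hslit0 : ∀ r : ℝ, (b:ℂ)^2 + (-2*Complex.I*(lam:ℂ)⁻¹) * (r:ℂ) ∈ Complex.slitPlane := by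
    intro r
    exact Complex.mem_slitPlane_iff.2 (Or.inl (by rw [hre0]; positivity))
  have habs0 : ∀ r : ℝ, b^2 ≤ ‖(b:ℂ)^2 + (-2*Complex.I*(lam:ℂ)⁻¹) * (r:ℂ)‖ := by
    intro r
    calc b^2 = |((b:ℂ)^2 + (-2*Complex.I*(lam:ℂ)⁻¹) * (r:ℂ)).re| := by
          rw [hre0 r]; exact (abs_of_pos (by positivity)).symm
      _ ≤ _ := Complex.abs_re_le_norm _
  -- family 1 facts
  have him1 : ∀ r : ℝ, (Complex.I*(lam:ℂ)*(b:ℂ)^2 + 2 * (r:ℂ)).im = lam*b^2 := by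
    intro r
    have h : Complex.I*(lam:ℂ)*(b:ℂ)^2 + 2 * (r:ℂ)
        = ((2*r : ℝ):ℂ) + ((lam*b^2 : ℝ):ℂ) * Complex.I := by push_cast; ring
    rw [h]
    simp [Complex.add_im, Complex.mul_im, Complex.I_re, Complex.I_im,
      Complex.ofReal_re, Complex.ofReal_im, ← Complex.ofReal_pow]
  have hslit1 : ∀ r : ℝ, Complex.I*(lam:ℂ)*(b:ℂ)^2 + 2 * (r:ℂ) ∈ Complex.slitPlane := by
    intro r
    exact Complex.mem_slitPlane_iff.2 (Or.inr (by rw [him1]; positivity))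
  have habs1 : ∀ r : ℝ, lam*b^2 ≤ ‖Complex.I*(lam:ℂ)*(b:ℂ)^2 + 2 * (r:ℂ)‖ := by
    intro r
    calc lam*b^2 = |(Complex.I*(lam:ℂ)*(b:ℂ)^2 + 2 * (r:ℂ)).im| := by
          rw [him1 r]; exact (abs_of_pos (by positivity)).symm
      _ ≤ _ := Complex.abs_im_le_norm _
  -- product decomposition
  have h2 : (Complex.I*(lam:ℂ)) * (-2*Complex.I*(lam:ℂ)⁻¹) = 2 := by
    rw [show (Complex.I*(lam:ℂ)) * (-2*Complex.I*(lam:ℂ)⁻¹)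
        = -2*(Complex.I*Complex.I)*((lam:ℂ)*(lam:ℂ)⁻¹) from by ring,
      Complex.I_mul_I, mul_inv_cancel₀ hlam']
    ring
  have hmulbase : ∀ r : ℝ, Complex.I*(lam:ℂ)*(b:ℂ)^2 + 2*(r:ℂ)
      = (Complex.I*(lam:ℂ)) * ((b:ℂ)^2 + (-2*Complex.I*(lam:ℂ)⁻¹)*(r:ℂ)) := by
    intro r
    rw [mul_add, ← mul_assoc, h2]
  have hpt : ∀ (r : ℝ) (c : ℂ), ((b:ℂ)^2 + (-2*Complex.I*(lam:ℂ)⁻¹)*(r:ℂ)) ^ c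
      = ((Complex.I*(lam:ℂ))^c)⁻¹ * ((Complex.I*(lam:ℂ)*(b:ℂ)^2) + 2*(r:ℂ)) ^ c := by
    intro r c
    have hcz : (Complex.I*(lam:ℂ))^c ≠ 0 := by
      simp [Complex.cpow_eq_zero_iff, hIl0]
    rw [hmulbase r, cpow_Imul lam hlam _ (by rw [hre0]; positivity) c, ← mul_assoc,
      inv_mul_cancel₀ hcz, one_mul]
  intro n hn
  induction n, hn using Nat.le_induction with
  | base =>
    intro θ
    -- rewrite the function as a sum
    have hfun : (fun θ : ℝ => ∫ s in (0:ℝ)..(lam*t),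
          -(a:ℂ) * (((b:ℂ)^2 - 2*Complex.I*((θ*lam⁻¹*(u s) : ℝ):ℂ)) ^ ((1 : ℂ)/2) - (b:ℂ)))
        = fun θ : ℝ => -(a:ℂ) * (∫ s in (0:ℝ)..(lam*t),
            ((u s : ℝ):ℂ)^0 * ((b:ℂ)^2 + (-2*Complex.I*(lam:ℂ)⁻¹) * θ * (u s)) ^ (((1/2:ℝ)):ℂ))
          + ((lam*t - 0:ℝ) • ((a:ℂ)*(b:ℂ))) := by
      funext θ'
      have hEq : Set.EqOn
          (fun s => -(a:ℂ) * (((b:ℂ)^2 - 2*Complex.I*((θ'*lam⁻¹*(u s) : ℝ):ℂ)) ^ ((1 : ℂ)/2) - (b:ℂ)))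
          (fun s => -(a:ℂ) * (((u s : ℝ):ℂ)^0 *
              ((b:ℂ)^2 + (-2*Complex.I*(lam:ℂ)⁻¹) * θ' * (u s)) ^ (((1/2:ℝ)):ℂ))
            + (a:ℂ)*(b:ℂ)) (Set.uIcc (0:ℝ) (lam*t)) := by
        intro s _
        simp only
        have hb0 : (b:ℂ)^2 - 2*Complex.I*((θ'*lam⁻¹*(u s) : ℝ):ℂ)
            = (b:ℂ)^2 + (-2*Complex.I*(lam:ℂ)⁻¹) * (θ':ℂ) * ((u s:ℝ):ℂ) := by
          push_cast; ring
        rw [hb0, show ((1:ℂ)/2) = (((1/2:ℝ)):ℂ) from by norm_num]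
        ring
      rw [intervalIntegral.integral_congr hEq, intervalIntegral.integral_add (f := fun s => -(a:ℂ) * (((u s : ℝ):ℂ)^0 *
              ((b:ℂ)^2 + (-2*Complex.I*(lam:ℂ)⁻¹) * θ' * (u s)) ^ (((1/2:ℝ)):ℂ)))
        ((continuous_const.continuousOn.mul
          (cont_aux hu (-2*Complex.I*(lam:ℂ)⁻¹) ((b:ℂ)^2) _ 0 θ' hslit0 _)).intervalIntegrable)
        intervalIntegrable_const,
        intervalIntegral.integral_const_mul, intervalIntegral.integral_const]
    have hK1 := fun x : ℝ => keyDeriv (T := lam*t) hu hub (-2*Complex.I*(lam:ℂ)⁻¹) ((b:ℂ)^2)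
      (1/2) (by norm_num) 0 (b^2) (by positivity) habs0 hslit0 x
    have hD1 : ∀ x : ℝ, HasDerivAt (fun θ : ℝ => ∫ s in (0:ℝ)..(lam*t),
          -(a:ℂ) * (((b:ℂ)^2 - 2*Complex.I*((θ*lam⁻¹*(u s) : ℝ):ℂ)) ^ ((1 : ℂ)/2) - (b:ℂ)))
        (-(a:ℂ) * ((((1/2:ℝ)):ℂ) * (-2*Complex.I*(lam:ℂ)⁻¹) * ∫ s in (0:ℝ)..(lam*t),
          ((u s : ℝ):ℂ)^(0+1) *
            ((b:ℂ)^2 + (-2*Complex.I*(lam:ℂ)⁻¹) * x * (u s)) ^ (((1/2 - 1:ℝ)):ℂ))) x := by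
      intro x
      rw [hfun]
      exact ((hK1 x).const_mul (-(a:ℂ))).add_const _
    have hd1' : deriv (fun θ : ℝ => ∫ s in (0:ℝ)..(lam*t),
          -(a:ℂ) * (((b:ℂ)^2 - 2*Complex.I*((θ*lam⁻¹*(u s) : ℝ):ℂ)) ^ ((1 : ℂ)/2) - (b:ℂ)))
        = fun x : ℝ => (-(a:ℂ) * ((((1/2:ℝ)):ℂ) * (-2*Complex.I*(lam:ℂ)⁻¹))) *
          ∫ s in (0:ℝ)..(lam*t), ((u s : ℝ):ℂ)^(0+1) *
            ((b:ℂ)^2 + (-2*Complex.I*(lam:ℂ)⁻¹) * x * (u s)) ^ (((1/2 - 1:ℝ)):ℂ) := by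
      funext x
      rw [(hD1 x).deriv]
      ring
    have hK2 := fun x : ℝ => keyDeriv (T := lam*t) hu hub (-2*Complex.I*(lam:ℂ)⁻¹) ((b:ℂ)^2)
      (1/2 - 1) (by norm_num) (0+1) (b^2) (by positivity) habs0 hslit0 x
    have e1 : iteratedDeriv 2 (fun θ : ℝ => ∫ s in (0:ℝ)..(lam*t),
          -(a:ℂ) * (((b:ℂ)^2 - 2*Complex.I*((θ*lam⁻¹*(u s) : ℝ):ℂ)) ^ ((1 : ℂ)/2) - (b:ℂ))) θ
        = deriv (deriv (fun θ : ℝ => ∫ s in (0:ℝ)..(lam*t),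
          -(a:ℂ) * (((b:ℂ)^2 - 2*Complex.I*((θ*lam⁻¹*(u s) : ℝ):ℂ)) ^ ((1 : ℂ)/2) - (b:ℂ)))) θ := by
      rw [show (2:ℕ) = 1+1 from rfl, iteratedDeriv_succ, iteratedDeriv_one]
    rw [e1, hd1', ((hK2 θ).const_mul (-(a:ℂ) * ((((1/2:ℝ)):ℂ) * (-2*Complex.I*(lam:ℂ)⁻¹)))).deriv]
    have hconv : (∫ s in (0:ℝ)..(lam*t), ((u s : ℝ):ℂ)^(0+1+1) *
          ((b:ℂ)^2 + (-2*Complex.I*(lam:ℂ)⁻¹) * θ * (u s)) ^ (((1/2 - 1 - 1:ℝ)):ℂ))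
        = ((Complex.I*(lam:ℂ))^((((1/2 - 1 - 1:ℝ)):ℂ)))⁻¹ * ∫ s in (0:ℝ)..(lam*t),
          ((u s : ℝ):ℂ)^(0+1+1) *
            (Complex.I*(lam:ℂ)*(b:ℂ)^2 + 2*(θ:ℂ)*((u s:ℝ):ℂ)) ^ (((1/2 - 1 - 1:ℝ)):ℂ) := by
      rw [← intervalIntegral.integral_const_mul]
      apply intervalIntegral.integral_congr
      intro s _
      simp only
      rw [castfact (-2*Complex.I*(lam:ℂ)⁻¹) ((b:ℂ)^2) θ (u s),
        castfact (2:ℂ) (Complex.I*(lam:ℂ)*(b:ℂ)^2) θ (u s), hpt (θ * u s)]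
      ring
    rw [hconv]
    rw [show ((1-2*((2:ℕ):ℝ))/2 : ℝ) = ((1/2 - 1 - 1:ℝ)) from by norm_num]
    have hsplit : (Complex.I*(lam:ℂ))^((((1/2 - 1 - 1:ℝ)):ℂ))
        = (Complex.I*(lam:ℂ))^((1:ℂ)/2) * ((Complex.I*(lam:ℂ))^(2:ℕ))⁻¹ := by
      rw [← Complex.cpow_natCast, ← Complex.cpow_neg, ← Complex.cpow_add _ _ hIl0]
      congr 1
      push_cast
      ring
    rw [hsplit, show ((Complex.I*(lam:ℂ))^(2:ℕ)) = -((lam:ℂ)^2) from by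
      rw [mul_pow, Complex.I_sq]; ring]
    rw [Finset.Icc_self, Finset.prod_singleton]
    rw [show ((0:ℕ)+1+1) = 2 from rfl]
    set S := ∫ s in (0:ℝ)..(lam*t), ((u s : ℝ):ℂ)^2 *
      (Complex.I*(lam:ℂ)*(b:ℂ)^2 + 2*(θ:ℂ)*((u s:ℝ):ℂ)) ^ (((1/2 - 1 - 1:ℝ)):ℂ) with hS
    push_cast
    have hl2 : ((lam:ℂ)^2) ≠ 0 := pow_ne_zero 2 hlam'
    field_simp
    ring_nf
    simp [Complex.I_sq]
  | succ n hn ih =>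
    intro θ
    rw [iteratedDeriv_succ, funext ih]
    have hKn := fun x : ℝ => keyDeriv (T := lam*t) hu hub 2 (Complex.I*(lam:ℂ)*(b:ℂ)^2)
      ((1-2*(n:ℝ))/2) (by
        have : (0:ℝ) ≤ n := Nat.cast_nonneg n
        linarith) n (lam*b^2) (by positivity) habs1 hslit1 x
    rw [((hKn θ).const_mul ((-1:ℂ)^n * (∏ k ∈ Finset.Icc 2 n, (2*(k:ℂ)-3)) *
      ((a:ℂ)/((Complex.I*(lam:ℂ))^((1:ℂ)/2))))).deriv]
    rw [show ((1-2*(n:ℝ))/2 - 1 : ℝ) = ((1-2*((n+1:ℕ):ℝ))/2 : ℝ) from by push_cast; ring]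
    rw [Finset.prod_Icc_succ_top (by omega : 2 ≤ n+1)]
    push_cast
    ring


/-- For `θ ≠ 0` and `n ≥ 2`, the `n`-th derivative of the cumulant integral
`I(θ) = ∫₀^{λt} Ψ(θλ⁻¹(1 - e^{-λt+s})) ds` equals
`(-1)ⁿ (∏_{k=2}^n (2k-3)) (a/√(iλ)) ∫₀^{λt} (1-e^{-λt+s})ⁿ (2θ(1-e^{-λt+s}) + iλb²)^{-(2n-1)/2} ds`
(principal branch complex powers). -/
theorem iteratedDeriv_IG_cumulant_integral
    (a b lam t : ℝ) (ha : 0 < a) (hb : 0 < b) (hlam : 0 < lam) (ht : 0 < t)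
    (n : ℕ) (hn : 2 ≤ n)
    (Ψ : ℝ → ℂ)
    (hΨ : ∀ x : ℝ, Ψ x = -(a : ℂ) * (((b : ℂ) ^ 2 - 2 * Complex.I * (x : ℂ)) ^ ((1 : ℂ)/2) - (b : ℂ))) :
    ∀ θ : ℝ, θ ≠ 0 →
      iteratedDeriv n
        (fun θ : ℝ => ∫ s in (0 : ℝ)..(lam * t), Ψ (θ * lam⁻¹ * (1 - Real.exp (-(lam * t) + s))))
        θ
      = (-1 : ℂ) ^ n * (∏ k ∈ Finset.Icc 2 n, (2 * (k : ℂ) - 3)) *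
          ((a : ℂ) / ((Complex.I * (lam : ℂ)) ^ ((1 : ℂ)/2))) *
          ∫ s in (0 : ℝ)..(lam * t),
            ((1 - Real.exp (-(lam * t) + s) : ℝ) : ℂ) ^ n *
              ((2 * (θ : ℂ) * ((1 - Real.exp (-(lam * t) + s) : ℝ) : ℂ) +
                Complex.I * (lam : ℂ) * (b : ℂ) ^ 2) ^ (-((2 * (n : ℂ) - 1) / 2))) := by
  intro θ hθ
  have hub : ∀ s ∈ Set.uIcc (0:ℝ) (lam*t), |(1 - Real.exp (-(lam*t)+s))| ≤ 1 := by
    intro s hs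
    rw [Set.uIcc_of_le (by positivity)] at hs
    have h1e : Real.exp (-(lam*t)+s) ≤ 1 := by
      rw [show (1:ℝ) = Real.exp 0 from (Real.exp_zero).symm]
      exact Real.exp_le_exp.2 (by linarith [hs.2])
    have h0e := Real.exp_pos (-(lam*t)+s)
    rw [abs_le]
    constructor <;> linarith
  have hcont : Continuous (fun s : ℝ => 1 - Real.exp (-(lam*t)+s)) := by continuity
  have hfg : (fun θ : ℝ => ∫ s in (0:ℝ)..(lam*t), Ψ (θ * lam⁻¹ * (1 - Real.exp (-(lam*t)+s))))
      = fun θ : ℝ => ∫ s in (0:ℝ)..(lam*t),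
          -(a:ℂ) * (((b:ℂ)^2 -
            2*Complex.I*((θ*lam⁻¹*(1 - Real.exp (-(lam*t)+s)) : ℝ):ℂ)) ^ ((1:ℂ)/2) - (b:ℂ)) := by
    funext θ'
    exact intervalIntegral.integral_congr (fun s _ => by rw [hΨ])
  rw [hfg]
  have h2 := helper a b lam t hb hlam (fun s => 1 - Real.exp (-(lam*t)+s)) hcont hub n hn θ
  rw [h2]
  congr 1
  apply intervalIntegral.integral_congr
  intro s _
  simp only
  rw [show -((2*(n:ℂ)-1)/2) = (((1-2*(n:ℝ))/2 : ℝ):ℂ) from by push_cast; ring]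
  congr 2
  ring
end

section
/- Let a, b, λ, t > 0, let n ≥ 2 be an integer, and let Ψ(x) = -a(√(b² - 2ix) - b) for real x, where √ denotes the principal branch of the complex square root. Then the n-th derivative at θ = 0 of I(θ) = ∫₀^{λt} Ψ( θ λ⁻¹ (1 - e^{-λt+s}) ) ds equals I⁽ⁿ⁾(0) = (-1)ⁿ ( ∏_{k=2}^{n} (2k-3) ) ( a / ((iλ)ⁿ b^{2n-1}) ) [ ∑_{k=1}^{n} C(n,k) (-1)^{k} (1 - e^{-kλt})/k + λt ], where C(n,k) denotes the binomial coefficient. -/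
open MeasureTheory Complex Finset

noncomputable def Dc (m : ℕ) : ℂ := ∏ j ∈ Finset.range m, (((1:ℂ)/2 - j) * (-(2*Complex.I)))

noncomputable def Psim (a b : ℝ) (m : ℕ) (x : ℝ) : ℂ :=
  -(a:ℂ) * Dc m * ((b:ℂ)^2 - 2*Complex.I*(x:ℂ)) ^ ((1:ℂ)/2 - m)

lemma Wc_mem_slitPlane (b : ℝ) (hb : 0 < b) (z : ℂ) (hz : z.im = 0) :
    (b:ℂ)^2 - 2*Complex.I*z ∈ Complex.slitPlane := by
  rw [Complex.mem_slitPlane_iff]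
  left
  simp [Complex.sub_re, Complex.mul_re, hz, ← Complex.ofReal_pow]
  positivity

lemma hasDerivAt_psim (a b : ℝ) (hb : 0 < b) (m : ℕ) (x : ℝ) :
    HasDerivAt (Psim a b m) (Psim a b (m+1) x) x := by
  have hin : HasDerivAt (fun z : ℂ => (b:ℂ)^2 - 2*Complex.I*z) (-(2*Complex.I)) ((x:ℝ):ℂ) := by
    simpa using (((hasDerivAt_id ((x:ℝ):ℂ)).const_mul (2*Complex.I)).const_sub ((b:ℂ)^2))
  have hcp : HasDerivAt (fun z : ℂ => ((b:ℂ)^2 - 2*Complex.I*z) ^ ((1:ℂ)/2 - m))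
      (((1:ℂ)/2 - m) * ((b:ℂ)^2 - 2*Complex.I*(x:ℂ)) ^ ((1:ℂ)/2 - m - 1) * (-(2*Complex.I)))
      ((x:ℝ):ℂ) :=
    hin.cpow_const (Wc_mem_slitPlane b hb _ (by simp))
  have hre := hcp.comp_ofReal
  have h2 := hre.const_mul (-(a:ℂ) * Dc m)
  have hexp : (1:ℂ)/2 - (m:ℂ) - 1 = (1:ℂ)/2 - ((m+1 : ℕ) : ℂ) := by push_cast; ring
  refine h2.congr_deriv (Eq.symm ?_)
  rw [Psim, Dc, Finset.prod_range_succ, ← Dc, hexp]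
  ring

lemma psim_cont (a b : ℝ) (hb : 0 < b) (m : ℕ) : Continuous (Psim a b m) :=
  continuous_iff_continuousAt.mpr fun x => (hasDerivAt_psim a b hb m x).continuousAt

lemma psim_norm_le (a b : ℝ) (ha : 0 ≤ a) (hb : 0 < b) (m : ℕ) (hm : 1 ≤ m) (x : ℝ) :
    ‖Psim a b m x‖ ≤ a * ‖Dc m‖ * (b^2) ^ ((1:ℝ)/2 - m) := by
  have hb2 : (0:ℝ) < b^2 := by positivity
  have habs : b^2 ≤ ‖(b:ℂ)^2 - 2*Complex.I*(x:ℂ)‖ := by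
    have := Complex.abs_re_le_norm ((b:ℂ)^2 - 2*Complex.I*(x:ℂ))
    have hre : ((b:ℂ)^2 - 2*Complex.I*(x:ℂ)).re = b^2 := by
      simp [Complex.sub_re, Complex.mul_re, ← Complex.ofReal_pow]
    rw [hre] at this
    exact (le_abs_self _).trans this
  have hexp : ((1:ℂ)/2 - (m:ℂ)) = (((1:ℝ)/2 - m : ℝ) : ℂ) := by push_cast; ring
  have : ‖((b:ℂ)^2 - 2*Complex.I*(x:ℂ)) ^ ((1:ℂ)/2 - (m:ℂ))‖
      ≤ (b^2) ^ ((1:ℝ)/2 - m) := by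
    rw [hexp, Complex.norm_cpow_real]
    have hneg : (1:ℝ)/2 - m ≤ 0 := by
      have : (1:ℝ) ≤ (m:ℝ) := by exact_mod_cast hm
      linarith
    exact Real.rpow_le_rpow_of_nonpos hb2 habs hneg
  calc ‖Psim a b m x‖
      = a * ‖Dc m‖ * ‖((b:ℂ)^2 - 2*Complex.I*(x:ℂ)) ^ ((1:ℂ)/2 - (m:ℂ))‖ := by
        rw [Psim, norm_mul, norm_mul,
          norm_neg, Complex.norm_of_nonneg ha]
    _ ≤ a * ‖Dc m‖ * (b^2) ^ ((1:ℝ)/2 - m) := by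
        apply mul_le_mul_of_nonneg_left this (by positivity)

noncomputable def Gcf (lam t : ℝ) (s : ℝ) : ℝ := lam⁻¹ * (1 - Real.exp (-(lam*t)+s))

noncomputable def Gfun (a b lam t : ℝ) (m : ℕ) (θ : ℝ) : ℂ :=
  ∫ s in (0:ℝ)..(lam*t), ((Gcf lam t s : ℝ):ℂ)^m * Psim a b m (θ * Gcf lam t s)

lemma gcf_cont (lam t : ℝ) : Continuous (Gcf lam t) := by
  unfold Gcf
  exact continuous_const.mul (continuous_const.sub (Real.continuous_exp.comp
    (continuous_const.add continuous_id)))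

lemma gcf_abs_le (lam t : ℝ) (hlam : 0 < lam) (s : ℝ) (hs : s ≤ lam*t) :
    |Gcf lam t s| ≤ lam⁻¹ := by
  have h1 : Real.exp (-(lam*t)+s) ≤ 1 := Real.exp_le_one_iff.mpr (by linarith)
  have h2 : 0 < Real.exp (-(lam*t)+s) := Real.exp_pos _
  rw [Gcf, abs_mul, abs_of_pos (inv_pos.mpr hlam)]
  nlinarith [_root_.abs_of_nonneg (by linarith : (0:ℝ) ≤ 1 - Real.exp (-(lam*t)+s)),
    inv_pos.mpr hlam]

lemma intF_cont (a b lam t : ℝ) (hb : 0 < b) (m : ℕ) (x : ℝ) :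
    Continuous (fun s => ((Gcf lam t s : ℝ):ℂ)^m * Psim a b m (x * Gcf lam t s)) := by
  exact ((Complex.continuous_ofReal.comp (gcf_cont lam t)).pow _).mul
    ((psim_cont a b hb m).comp (continuous_const.mul (gcf_cont lam t)))

lemma hasDerivAt_Gfun (a b lam t : ℝ) (ha : 0 ≤ a) (hb : 0 < b) (hlam : 0 < lam)
    (ht : 0 < t) (m : ℕ) (θ : ℝ) :
    HasDerivAt (Gfun a b lam t m) (Gfun a b lam t (m+1) θ) θ := by
  have hT : (0:ℝ) ≤ lam * t := by positivity
  have key := (intervalIntegral.hasDerivAt_integral_of_dominated_loc_of_deriv_le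
    (F := fun x s => ((Gcf lam t s : ℝ):ℂ)^m * Psim a b m (x * Gcf lam t s))
    (F' := fun x s => ((Gcf lam t s : ℝ):ℂ)^(m+1) * Psim a b (m+1) (x * Gcf lam t s))
    (bound := fun _ => (lam⁻¹)^(m+1) * (a * ‖Dc (m+1)‖ * (b^2) ^ ((1:ℝ)/2 - (m+1:ℕ))))
    (μ := volume) (a := 0) (b := lam*t) (x₀ := θ) (Metric.ball_mem_nhds θ one_pos)
    (Filter.Eventually.of_forall fun x =>
      (intF_cont a b lam t hb m x).aestronglyMeasurable)
    ((intF_cont a b lam t hb m θ).intervalIntegrable _ _)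
    (intF_cont a b lam t hb (m+1) θ).aestronglyMeasurable
    ?_ (intervalIntegrable_const) ?_).2
  · exact key
  · refine Filter.Eventually.of_forall fun s hs x _ => ?_
    rw [Set.uIoc_of_le hT] at hs
    have hg := gcf_abs_le lam t hlam s hs.2
    rw [norm_mul, norm_pow, Complex.norm_real]
    refine mul_le_mul (pow_le_pow_left₀ (abs_nonneg _) hg _)
      (psim_norm_le a b ha hb (m+1) (by omega) _) (norm_nonneg _) (by positivity)
  · refine Filter.Eventually.of_forall fun s hs x _ => ?_
    have h1 : HasDerivAt (fun x : ℝ => x * Gcf lam t s) (Gcf lam t s) x := by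
      simpa using (hasDerivAt_id x).mul_const (Gcf lam t s)
    have h2 := HasDerivAt.scomp_of_eq x (hasDerivAt_psim a b hb m (x * Gcf lam t s)) h1 rfl
    have h3 := h2.const_mul (((Gcf lam t s : ℝ):ℂ)^m)
    simp only [Function.comp] at h3
    refine h3.congr_deriv (Eq.symm ?_)
    simp only [pow_succ, Complex.real_smul]
    ring

lemma iteratedDeriv_Gfun (a b lam t : ℝ) (ha : 0 ≤ a) (hb : 0 < b) (hlam : 0 < lam)
    (ht : 0 < t) : ∀ k m, iteratedDeriv k (Gfun a b lam t m) = Gfun a b lam t (m+k) := by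
  intro k
  induction k with
  | zero => intro m; simp [iteratedDeriv_zero]
  | succ k ih =>
    intro m
    rw [iteratedDeriv_succ']
    have hd : deriv (Gfun a b lam t m) = Gfun a b lam t (m+1) :=
      funext fun θ => (hasDerivAt_Gfun a b lam t ha hb hlam ht m θ).deriv
    rw [hd, ih (m+1), show m+1+k = m+(k+1) from by omega]

lemma integral_exp_term (T : ℝ) (k : ℕ) (hk : 1 ≤ k) :
    ∫ s in (0:ℝ)..T, (-(Complex.exp ((s:ℂ) - ((T:ℝ):ℂ))))^k
    = (-1:ℂ)^k * (1 - Complex.exp (-(k:ℂ)*((T:ℝ):ℂ))) / k := by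
  have hk0 : ((k:ℂ)) ≠ 0 := Nat.cast_ne_zero.mpr (by omega)
  have h1 : ∀ s : ℝ, (-(Complex.exp ((s:ℂ) - ((T:ℝ):ℂ))))^k
      = Complex.exp ((k:ℂ)*(s:ℂ)) * ((-1:ℂ)^k * Complex.exp (-(k:ℂ)*((T:ℝ):ℂ))) := by
    intro s
    rw [neg_pow, ← Complex.exp_nat_mul,
      show (k:ℂ)*((s:ℂ)-((T:ℝ):ℂ)) = (k:ℂ)*s + (-(k:ℂ)*T) from by ring, Complex.exp_add]
    ring
  rw [intervalIntegral.integral_congr (fun s _ => h1 s), intervalIntegral.integral_mul_const,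
    integral_exp_mul_complex hk0]
  have h2 : Complex.exp ((k:ℂ)*((T:ℝ):ℂ)) * Complex.exp (-((k:ℂ)*((T:ℝ):ℂ))) = 1 := by
    rw [← Complex.exp_add]; simp
  have h3 : Complex.exp ((k:ℂ)*((0:ℝ):ℂ)) = 1 := by simp
  rw [h3]
  field_simp
  linear_combination h2

lemma integral_gcf_pow (lam t : ℝ) (n : ℕ) :
    ∫ s in (0:ℝ)..(lam*t), ((Gcf lam t s : ℝ):ℂ)^n
    = (((lam⁻¹:ℝ)):ℂ)^n * ((((lam*t:ℝ)):ℂ) +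
        ∑ k ∈ Finset.Icc 1 n, (n.choose k : ℂ) *
          ((-1:ℂ)^k * (1 - Complex.exp (-(k:ℂ)*((lam*t:ℝ):ℂ))) / k)) := by
  have h1 : ∀ s : ℝ, ((Gcf lam t s : ℝ):ℂ)^n = (((lam⁻¹:ℝ)):ℂ)^n *
      ∑ k ∈ Finset.range (n+1),
        (-(Complex.exp ((s:ℂ) - ((lam*t:ℝ):ℂ))))^k * ((n.choose k : ℂ)) := by
    intro s
    have h0 : ((Gcf lam t s : ℝ):ℂ)
        = (((lam⁻¹:ℝ)):ℂ) * ((-(Complex.exp ((s:ℂ) - ((lam*t:ℝ):ℂ)))) + 1) := by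
      rw [Gcf, show -(lam*t)+s = s - lam*t from by ring]
      push_cast
      ring
    rw [h0, mul_pow, add_pow]
    simp
  rw [intervalIntegral.integral_congr (fun s _ => h1 s), intervalIntegral.integral_const_mul]
  congr 1
  have hint : ∀ k ∈ Finset.range (n+1), IntervalIntegrable
      (fun s : ℝ => (-(Complex.exp ((s:ℂ) - ((lam*t:ℝ):ℂ))))^k * ((n.choose k : ℂ)))
      volume 0 (lam*t) := by
    intro k _
    apply Continuous.intervalIntegrable
    exact (((Complex.continuous_exp.comp (Complex.continuous_ofReal.sub
      continuous_const)).neg).pow k).mul continuous_const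
  rw [intervalIntegral.integral_finset_sum hint,
    show Finset.range (n+1) = insert 0 (Finset.Icc 1 n) from by
      ext j; simp [Nat.lt_succ_iff]; omega,
    Finset.sum_insert (by simp)]
  congr 1
  · simp
  · refine Finset.sum_congr rfl fun k hk => ?_
    rw [intervalIntegral.integral_mul_const,
      integral_exp_term (lam*t) k (Finset.mem_Icc.mp hk).1]
    ring

lemma Dc_eq : ∀ n : ℕ, 1 ≤ n →
    Dc n = -(Complex.I^n) * ∏ k ∈ Finset.Icc 2 n, (2*(k:ℂ)-3) := by
  intro n
  induction n with
  | zero => omega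
  | succ n ih =>
    intro _
    rcases Nat.eq_zero_or_pos n with rfl | hpos
    · rw [Dc]
      norm_num [Finset.prod_range_succ]
      ring
    · rw [Dc, Finset.prod_range_succ, ← Dc, ih hpos,
        Finset.prod_Icc_succ_top (show 2 ≤ n+1 by omega)]
      push_cast
      ring

lemma cpow_b2 (b : ℝ) (hb : 0 < b) (n : ℕ) :
    ((b:ℂ)^2) ^ ((1:ℂ)/2 - n) = (b:ℂ) / (b:ℂ)^(2*n) := by
  have h1 : ((b:ℂ)^2) = (((b^2 : ℝ)):ℂ) := by push_cast; ring
  have h2 : ((1:ℂ)/2 - (n:ℂ)) = (((1/2 - n : ℝ)):ℂ) := by push_cast; ring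
  have h3 : (b^2 : ℝ) ^ ((1:ℝ)/2 - n) = b / b^(2*n) := by
    rw [Real.rpow_sub (by positivity), Real.rpow_natCast, ← pow_mul,
      ← Real.sqrt_eq_rpow, Real.sqrt_sq hb.le]
  rw [h1, h2, ← Complex.ofReal_cpow (by positivity), h3]
  push_cast
  ring

/-- For `n ≥ 2`, the `n`-th derivative at `θ = 0` of the cumulant integral
`I(θ) = ∫₀^{λt} Ψ(θλ⁻¹(1 - e^{-λt+s})) ds` equals
`(-1)ⁿ (∏_{k=2}^n (2k-3)) (a/((iλ)ⁿ b^{2n-1})) [∑_{k=1}^n C(n,k)(-1)^k (1-e^{-kλt})/k + λt]`. -/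
theorem iteratedDeriv_IG_cumulant_integral_zero
    (a b lam t : ℝ) (ha : 0 < a) (hb : 0 < b) (hlam : 0 < lam) (ht : 0 < t)
    (n : ℕ) (hn : 2 ≤ n)
    (Ψ : ℝ → ℂ)
    (hΨ : ∀ x : ℝ, Ψ x = -(a : ℂ) * (((b : ℂ) ^ 2 - 2 * Complex.I * (x : ℂ)) ^ ((1 : ℂ)/2) - (b : ℂ))) :
    iteratedDeriv n
      (fun θ : ℝ => ∫ s in (0 : ℝ)..(lam * t), Ψ (θ * lam⁻¹ * (1 - Real.exp (-(lam * t) + s))))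
      0
    = (-1 : ℂ) ^ n * (∏ k ∈ Finset.Icc 2 n, (2 * (k : ℂ) - 3)) *
        ((a : ℂ) / ((Complex.I * (lam : ℂ)) ^ n * (b : ℂ) ^ (2 * n - 1))) *
        ((∑ k ∈ Finset.Icc 1 n, (n.choose k : ℂ) * (-1 : ℂ) ^ k *
            ((1 - Real.exp (-(k : ℝ) * lam * t) : ℝ) : ℂ) / (k : ℂ))
          + (lam : ℂ) * (t : ℂ)) := by
  have ha' : (0:ℝ) ≤ a := ha.le
  have hΨ' : ∀ x : ℝ, Ψ x = Psim a b 0 x + (a:ℂ)*b := by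
    intro x
    rw [hΨ x, Psim, Dc]
    simp
    ring
  have hFeq : (fun θ : ℝ => ∫ s in (0:ℝ)..(lam*t), Ψ (θ * lam⁻¹ * (1 - Real.exp (-(lam*t) + s))))
      = fun θ => Gfun a b lam t 0 θ + ((lam*t - 0 : ℝ)) • ((a:ℂ)*b) := by
    funext θ
    have hint1 : IntervalIntegrable (fun s : ℝ => Psim a b 0 (θ * Gcf lam t s)) volume 0 (lam*t) :=
      (((psim_cont a b hb 0).comp (continuous_const.mul (gcf_cont lam t))).intervalIntegrable _ _)
    have heq : ∀ s : ℝ, Ψ (θ * lam⁻¹ * (1 - Real.exp (-(lam*t) + s)))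
        = Psim a b 0 (θ * Gcf lam t s) + (a:ℂ)*b := by
      intro s
      rw [show θ * lam⁻¹ * (1 - Real.exp (-(lam*t) + s)) = θ * Gcf lam t s from by
        rw [Gcf]; ring, hΨ']
    rw [intervalIntegral.integral_congr (fun s _ => heq s),
      intervalIntegral.integral_add hint1 intervalIntegrable_const,
      intervalIntegral.integral_const]
    congr 1
    rw [Gfun]
    apply intervalIntegral.integral_congr
    intro s _
    simp
  rw [hFeq]
  obtain ⟨m, rfl⟩ : ∃ m, n = m + 1 := ⟨n - 1, by omega⟩
  rw [iteratedDeriv_succ']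
  have hder : (deriv fun θ => Gfun a b lam t 0 θ + ((lam*t - 0 : ℝ)) • ((a:ℂ)*b))
      = deriv (Gfun a b lam t 0) := by
    funext θ
    exact deriv_add_const _
  rw [hder, ← iteratedDeriv_succ',
    iteratedDeriv_Gfun a b lam t ha' hb hlam ht (m+1) 0]
  simp only [Nat.zero_add]
  have hGeval : Gfun a b lam t (m+1) 0
      = (∫ s in (0:ℝ)..(lam*t), ((Gcf lam t s:ℝ):ℂ)^(m+1)) * Psim a b (m+1) 0 := by
    rw [Gfun, ← intervalIntegral.integral_mul_const]
    apply intervalIntegral.integral_congr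
    intro s _
    simp
  have hPsim0 : Psim a b (m+1) 0
      = -(a:ℂ) * (-(Complex.I^(m+1)) * ∏ k ∈ Finset.Icc 2 (m+1), (2*(k:ℂ)-3)) *
        ((b:ℂ) / (b:ℂ)^(2*(m+1))) := by
    rw [Psim]
    simp only [Complex.ofReal_zero, mul_zero, sub_zero]
    rw [Dc_eq (m+1) (by omega), cpow_b2 b hb]
  rw [hGeval, hPsim0, integral_gcf_pow]
  have hS : (∑ k ∈ Finset.Icc 1 (m+1), ((m+1).choose k : ℂ) *
        ((-1:ℂ)^k * (1 - Complex.exp (-(k:ℂ)*((lam*t:ℝ):ℂ))) / k))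
      = ∑ k ∈ Finset.Icc 1 (m+1), ((m+1).choose k : ℂ) * (-1:ℂ)^k *
        ((1 - Real.exp (-(k:ℝ) * lam * t) : ℝ) : ℂ) / (k:ℂ) := by
    refine Finset.sum_congr rfl fun k _ => ?_
    rw [show Complex.exp (-(k:ℂ)*((lam*t:ℝ):ℂ)) = ((Real.exp (-(k:ℝ)*lam*t):ℝ):ℂ) from by
      rw [Complex.ofReal_exp]; congr 1; push_cast; ring]
    push_cast
    ring
  rw [hS]
  have hb0 : (b:ℂ) ≠ 0 := Complex.ofReal_ne_zero.mpr hb.ne'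
  have hlam0 : (lam:ℂ) ≠ 0 := Complex.ofReal_ne_zero.mpr hlam.ne'
  have hIpow : ((-1:ℂ))^(m+1) = Complex.I^(m+1) * Complex.I^(m+1) := by
    rw [← Complex.I_sq, ← pow_mul, two_mul, pow_add]
  have hbp : (b:ℂ)^(2*(m+1)) = (b:ℂ)^(2*(m+1)-1) * b := by
    conv_lhs => rw [show 2*(m+1) = (2*(m+1)-1)+1 from by omega]
    rw [pow_succ]
  rw [hIpow, hbp]
  push_cast
  simp only [inv_pow]
  field_simp
  ring
end

section
/- Let A, B, v > 0 and let γ be the standard Gaussian measure N(0,1) on ℝ. Then ∫_ℝ max( A e^{√v z - v/2} - B , 0 ) dγ(z) = A Φ(d₁) - B Φ(d₂), where d₁ = ( log(A/B) + v/2 ) / √v, d₂ = d₁ - √v, and Φ is the cumulative distribution function of the standard Gaussian measure on ℝ. -/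
open MeasureTheory ProbabilityTheory

lemma gpdf_even (x : ℝ) : gaussianPDFReal 0 1 (-x) = gaussianPDFReal 0 1 x := by
  simp [gaussianPDFReal]

lemma gauss_neg_int (d : ℝ) :
    ∫ z in Set.Ici (-d), gaussianPDFReal 0 1 z
      = ∫ z in Set.Iic d, gaussianPDFReal 0 1 z := by
  rw [← integral_indicator measurableSet_Ici, ← integral_indicator measurableSet_Iic,
    ← integral_neg_eq_self ((Set.Ici (-d)).indicator (gaussianPDFReal 0 1)) volume]
  congr 1
  ext x
  by_cases hx : x ≤ d
  · rw [Set.indicator_of_mem (show -x ∈ Set.Ici (-d) from neg_le_neg hx),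
      Set.indicator_of_mem (show x ∈ Set.Iic d from hx), gpdf_even]
  · rw [Set.indicator_of_notMem, Set.indicator_of_notMem]
    · simpa using hx
    · simp only [Set.mem_Ici, neg_le_neg_iff]
      simpa using hx

lemma gauss_trans_int (c s : ℝ) :
    ∫ z in Set.Ici c, gaussianPDFReal s 1 z
      = ∫ z in Set.Ici (c - s), gaussianPDFReal 0 1 z := by
  rw [← integral_indicator measurableSet_Ici, ← integral_indicator measurableSet_Ici,
    ← integral_sub_right_eq_self ((Set.Ici (c - s)).indicator (gaussianPDFReal 0 1)) s]
  congr 1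
  ext z
  by_cases hz : c ≤ z
  · rw [Set.indicator_of_mem (show z ∈ Set.Ici c from hz),
      Set.indicator_of_mem (show z - s ∈ Set.Ici (c - s) by
        simp only [Set.mem_Ici]; linarith),
      gaussianPDFReal_sub, zero_add]
  · rw [Set.indicator_of_notMem, Set.indicator_of_notMem]
    · simpa using hz
    · simp only [Set.mem_Ici, sub_le_sub_iff_right, not_le]
      simpa using hz

/-- Black–Scholes/Margrabe-type Gaussian integral: with `γ = N(0,1)`,
`∫ max(A e^{√v z - v/2} - B, 0) dγ(z) = A Φ(d₁) - B Φ(d₂)` where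
`d₁ = (log(A/B) + v/2)/√v`, `d₂ = d₁ - √v`, and `Φ` is the standard Gaussian CDF. -/
theorem gaussian_integral_margrabe
    (A B v : ℝ) (hA : 0 < A) (hB : 0 < B) (hv : 0 < v)
    (Φ : ℝ → ℝ) (hΦ : ∀ x, Φ x = ((gaussianReal 0 1) (Set.Iic x)).toReal)
    (d₁ d₂ : ℝ)
    (hd₁ : d₁ = (Real.log (A / B) + v / 2) / Real.sqrt v)
    (hd₂ : d₂ = d₁ - Real.sqrt v) :
    (∫ z, max (A * Real.exp (Real.sqrt v * z - v / 2) - B) 0 ∂(gaussianReal 0 1))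
      = A * Φ d₁ - B * Φ d₂ := by
  have hΦint : ∀ d : ℝ, Φ d = ∫ z in Set.Iic d, gaussianPDFReal 0 1 z := by
    intro d
    rw [hΦ, gaussianReal_apply_eq_integral 0 one_ne_zero, ENNReal.toReal_ofReal]
    exact setIntegral_nonneg measurableSet_Iic fun x _ => gaussianPDFReal_nonneg _ _ _
  set s := Real.sqrt v with hsdef
  have hs : 0 < s := Real.sqrt_pos.mpr hv
  have hs2 : s ^ 2 = v := Real.sq_sqrt hv.le
  set c : ℝ := -d₂ with hcdef
  have hsd₁ : s * d₁ = Real.log (A / B) + v / 2 := by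
    rw [hd₁]; field_simp
  have hlog : Real.log (B / A) = -Real.log (A / B) := by
    rw [← Real.log_inv, inv_div]
  have hsc : s * c - v / 2 = Real.log (B / A) := by
    rw [hcdef, hd₂]
    have : s * -(d₁ - s) = -(s * d₁) + s ^ 2 := by ring
    rw [this, hsd₁, hs2, hlog]; ring
  have hcs : c - s = -d₁ := by rw [hcdef, hd₂]; ring
  have hBexp : B = A * Real.exp (s * c - v / 2) := by
    rw [hsc, Real.exp_log (div_pos hB hA)]
    field_simp
  have hthresh : ∀ z : ℝ, (0 ≤ A * Real.exp (s * z - v / 2) - B) ↔ c ≤ z := by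
    intro z
    rw [sub_nonneg]
    nth_rewrite 1 [hBexp]
    rw [mul_le_mul_iff_right₀ hA, Real.exp_le_exp]
    constructor
    · intro h; nlinarith
    · intro h; nlinarith
  have pdfident : ∀ z : ℝ, gaussianPDFReal 0 1 z * Real.exp (s * z - v / 2)
      = gaussianPDFReal s 1 z := by
    intro z
    simp only [gaussianPDFReal, NNReal.coe_one, mul_one, sub_zero]
    rw [mul_assoc, ← Real.exp_add]
    have harg : -z ^ 2 / 2 + (s * z - v / 2) = -(z - s) ^ 2 / 2 := by
      field_simp
      linarith [hs2]
    rw [harg]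
  have hmeas : Measurable fun z : ℝ => (gaussianPDFReal 0 1 z).toNNReal :=
    (measurable_gaussianPDFReal 0 1).real_toNNReal
  have h1 : (∫ z, max (A * Real.exp (s * z - v / 2) - B) 0 ∂(gaussianReal 0 1))
      = ∫ z, gaussianPDFReal 0 1 z * max (A * Real.exp (s * z - v / 2) - B) 0 := by
    rw [gaussianReal_of_var_ne_zero 0 one_ne_zero]
    rw [show gaussianPDF 0 1 = fun x => ((gaussianPDFReal 0 1 x).toNNReal : ENNReal) from rfl]
    rw [integral_withDensity_eq_integral_smul hmeas]
    refine integral_congr_ae (Filter.Eventually.of_forall fun z => ?_)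
    simp only [NNReal.smul_def, smul_eq_mul,
      Real.coe_toNNReal _ (gaussianPDFReal_nonneg 0 1 z)]
  have h2 : ∀ z : ℝ, gaussianPDFReal 0 1 z * max (A * Real.exp (s * z - v / 2) - B) 0
      = (Set.Ici c).indicator
          (fun z => A * gaussianPDFReal s 1 z - B * gaussianPDFReal 0 1 z) z := by
    intro z
    by_cases hz : c ≤ z
    · rw [Set.indicator_of_mem (show z ∈ Set.Ici c from hz),
        max_eq_left ((hthresh z).mpr hz), mul_sub, ← pdfident z]
      ring
    · rw [Set.indicator_of_notMem (by simpa using hz),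
        max_eq_right (by
          have := (hthresh z).not
          push_neg at this
          exact (this.mpr (lt_of_not_ge hz)).le), mul_zero]
  have hintS : Integrable (fun z => gaussianPDFReal s 1 z)
      (volume.restrict (Set.Ici c)) := (integrable_gaussianPDFReal s 1).restrict
  have hint0 : Integrable (fun z => gaussianPDFReal 0 1 z)
      (volume.restrict (Set.Ici c)) := (integrable_gaussianPDFReal 0 1).restrict
  rw [h1]
  calc ∫ z, gaussianPDFReal 0 1 z * max (A * Real.exp (s * z - v / 2) - B) 0
      = ∫ z, (Set.Ici c).indicator
          (fun z => A * gaussianPDFReal s 1 z - B * gaussianPDFReal 0 1 z) z := by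
        exact integral_congr_ae (Filter.Eventually.of_forall h2)
    _ = ∫ z in Set.Ici c,
          (A * gaussianPDFReal s 1 z - B * gaussianPDFReal 0 1 z) := by
        rw [integral_indicator measurableSet_Ici]
    _ = A * (∫ z in Set.Ici c, gaussianPDFReal s 1 z)
          - B * (∫ z in Set.Ici c, gaussianPDFReal 0 1 z) := by
        rw [integral_sub (hintS.const_mul A) (hint0.const_mul B),
          integral_const_mul, integral_const_mul]
    _ = A * Φ d₁ - B * Φ d₂ := by
        rw [gauss_trans_int c s, hcs, gauss_neg_int d₁, hcdef, gauss_neg_int d₂,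
          hΦint d₁, hΦint d₂]
end
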